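/- Let κ > 0 and λ > 0. There exists (a,b) ∈ ℝ² with (a,b) ≠ (0,0) such that the function v(x) = a·sin(√λ x) + b·cos(√λ x) satisfies the non-local boundary conditions v'(0) = −κ²∫₀¹(1−s)·v(s)ds and v'(1) = κ²∫₀¹ s·v(s)ds, if and only if Det(λ) = 0, where Det(λ) = 2κ²λ^{−1/2}(1−cos√λ)(1+κ²/λ) − sin(√λ)(κ²/√λ+√λ)². -/

import Mathlib

open Real intervalIntegral

/-- The determinant `Det(λ)` of the 2×2 linear system obtained by imposing the
non-local boundary conditions on `a·sin(√λ x) + b·cos(√λ x)`. -/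
noncomputable def Det (κ l : ℝ) : ℝ :=
  2 * κ ^ 2 / Real.sqrt l * (1 - Real.cos (Real.sqrt l)) * (1 + κ ^ 2 / l)
    - Real.sin (Real.sqrt l) * (κ ^ 2 / Real.sqrt l + Real.sqrt l) ^ 2

lemma linsys (A B C D : ℝ) :
    (∃ a b : ℝ, (a, b) ≠ ((0:ℝ), (0:ℝ)) ∧ A*a + B*b = 0 ∧ C*a + D*b = 0) ↔
      A*D - B*C = 0 := by
  constructor
  · rintro ⟨a, b, hab, h1, h2⟩
    have ha : (A*D - B*C) * a = 0 := by linear_combination D * h1 - B * h2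
    have hb : (A*D - B*C) * b = 0 := by linear_combination A * h2 - C * h1
    rcases mul_eq_zero.mp ha with h | h
    · exact h
    · rcases mul_eq_zero.mp hb with h' | h'
      · exact h'
      · exact absurd (Prod.ext h h') hab
  · intro h
    by_cases hA : A = 0 ∧ B = 0
    · by_cases hC : C = 0 ∧ D = 0
      · exact ⟨1, 0, by norm_num [Prod.ext_iff],
          by rw [hA.1, hA.2]; ring, by rw [hC.1, hC.2]; ring⟩
      · refine ⟨-D, C, ?_, by rw [hA.1, hA.2]; ring, by ring⟩
        simp only [Ne, Prod.mk.injEq, neg_eq_zero, not_and]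
        intro hD hC'; exact hC ⟨hC', hD⟩
    · refine ⟨-B, A, ?_, by ring, by linear_combination h⟩
      simp only [Ne, Prod.mk.injEq, neg_eq_zero, not_and]
      intro hB hA'; exact hA ⟨hA', hB⟩

lemma deriv_v (a b μ x : ℝ) :
    HasDerivAt (fun x => a * Real.sin (μ * x) + b * Real.cos (μ * x))
      (a * (Real.cos (μ * x) * μ) + b * (-Real.sin (μ * x) * μ)) x := by
  have h1 : HasDerivAt (fun x : ℝ => μ * x) μ x := by
    simpa using (hasDerivAt_id x).const_mul μ
  exact (((Real.hasDerivAt_sin (μ*x)).comp x h1).const_mul a).add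
    (((Real.hasDerivAt_cos (μ*x)).comp x h1).const_mul b)

lemma int1 (a b μ : ℝ) (hμ : μ ≠ 0) :
    (∫ s in (0:ℝ)..1, (1 - s) * (a * Real.sin (μ * s) + b * Real.cos (μ * s)))
      = a * ((μ - Real.sin μ) / μ^2) + b * ((1 - Real.cos μ) / μ^2) := by
  have key : ∀ s : ℝ, HasDerivAt
      (fun s => a * (-((1 - s) * Real.cos (μ * s)) / μ - Real.sin (μ * s) / μ^2)
        + b * ((1 - s) * Real.sin (μ * s) / μ - Real.cos (μ * s) / μ^2))
      ((1 - s) * (a * Real.sin (μ * s) + b * Real.cos (μ * s))) s := by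
    intro s
    have h1 : HasDerivAt (fun s : ℝ => μ * s) μ s := by
      simpa using (hasDerivAt_id s).const_mul μ
    have hs := (Real.hasDerivAt_sin (μ*s)).comp s h1
    have hc := (Real.hasDerivAt_cos (μ*s)).comp s h1
    have hone : HasDerivAt (fun s : ℝ => 1 - s) (-1) s := by
      simpa using (hasDerivAt_id s).const_sub 1
    have hA := ((((hone.mul hc).neg).div_const μ).sub (hs.div_const (μ^2))).const_mul a
    have hB := (((hone.mul hs).div_const μ).sub (hc.div_const (μ^2))).const_mul b
    refine (hA.add hB).congr_deriv ?_
    simp only [Function.comp_apply]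
    field_simp
    ring
  rw [intervalIntegral.integral_eq_sub_of_hasDerivAt (fun s _ => key s)
    (by apply Continuous.intervalIntegrable; continuity)]
  simp only [mul_one, mul_zero, Real.sin_zero, Real.cos_zero, sub_zero, sub_self]
  field_simp
  ring

lemma int2 (a b μ : ℝ) (hμ : μ ≠ 0) :
    (∫ s in (0:ℝ)..1, s * (a * Real.sin (μ * s) + b * Real.cos (μ * s)))
      = a * (-Real.cos μ / μ + Real.sin μ / μ^2)
        + b * (Real.sin μ / μ + Real.cos μ / μ^2 - 1 / μ^2) := by
  have key : ∀ s : ℝ, HasDerivAt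
      (fun s => a * (-(s * Real.cos (μ * s)) / μ + Real.sin (μ * s) / μ^2)
        + b * (s * Real.sin (μ * s) / μ + Real.cos (μ * s) / μ^2))
      (s * (a * Real.sin (μ * s) + b * Real.cos (μ * s))) s := by
    intro s
    have h1 : HasDerivAt (fun s : ℝ => μ * s) μ s := by
      simpa using (hasDerivAt_id s).const_mul μ
    have hs := (Real.hasDerivAt_sin (μ*s)).comp s h1
    have hc := (Real.hasDerivAt_cos (μ*s)).comp s h1
    have hid : HasDerivAt (fun s : ℝ => s) 1 s := hasDerivAt_id s
    have hA := ((((hid.mul hc).neg).div_const μ).add (hs.div_const (μ^2))).const_mul a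
    have hB := (((hid.mul hs).div_const μ).add (hc.div_const (μ^2))).const_mul b
    refine (hA.add hB).congr_deriv ?_
    simp only [Function.comp_apply]
    field_simp
    ring
  rw [intervalIntegral.integral_eq_sub_of_hasDerivAt (fun s _ => key s)
    (by apply Continuous.intervalIntegrable; continuity)]
  simp only [mul_one, mul_zero, Real.sin_zero, Real.cos_zero, zero_mul, zero_div,
    neg_zero, zero_add]
  field_simp
  ring

/-- **Characterization of eigenvalues.** For `κ, λ > 0`, there is a nontrivial
`(a,b)` such that `v(x) = a·sin(√λ x) + b·cos(√λ x)` satisfies the non-local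
boundary conditions `v'(0) = -κ²∫₀¹(1-s)v(s)ds`, `v'(1) = κ²∫₀¹ s·v(s)ds`
iff `Det(λ) = 0`. -/
theorem eigenvalue_iff_det_zero (κ l : ℝ) (hκ : 0 < κ) (hl : 0 < l) :
    (∃ a b : ℝ, (a, b) ≠ ((0:ℝ), (0:ℝ)) ∧
      deriv (fun x => a * Real.sin (Real.sqrt l * x)
          + b * Real.cos (Real.sqrt l * x)) 0
        = -κ ^ 2 * ∫ s in (0:ℝ)..1,
            (1 - s) * (a * Real.sin (Real.sqrt l * s)
              + b * Real.cos (Real.sqrt l * s)) ∧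
      deriv (fun x => a * Real.sin (Real.sqrt l * x)
          + b * Real.cos (Real.sqrt l * x)) 1
        = κ ^ 2 * ∫ s in (0:ℝ)..1,
            s * (a * Real.sin (Real.sqrt l * s)
              + b * Real.cos (Real.sqrt l * s))) ↔
    Det κ l = 0 := by
  set μ := Real.sqrt l with hμdef
  have hμ : 0 < μ := Real.sqrt_pos.mpr hl
  have hμ0 : μ ≠ 0 := hμ.ne'
  have hμ2 : μ ^ 2 = l := Real.sq_sqrt hl.le
  have hiff1 : ∀ a b : ℝ,
      (deriv (fun x => a * Real.sin (μ * x) + b * Real.cos (μ * x)) 0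
          = -κ ^ 2 * ∫ s in (0:ℝ)..1,
              (1 - s) * (a * Real.sin (μ * s) + b * Real.cos (μ * s))) ↔
      (μ + κ^2 * ((μ - Real.sin μ) / μ^2)) * a
        + (κ^2 * ((1 - Real.cos μ) / μ^2)) * b = 0 := by
    intro a b
    rw [(deriv_v a b μ 0).deriv, int1 a b μ hμ0]
    simp only [mul_zero, Real.sin_zero, Real.cos_zero]
    rw [← sub_eq_zero]
    constructor <;> intro h <;> linear_combination h
  have hiff2 : ∀ a b : ℝ,
      (deriv (fun x => a * Real.sin (μ * x) + b * Real.cos (μ * x)) 1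
          = κ ^ 2 * ∫ s in (0:ℝ)..1,
              s * (a * Real.sin (μ * s) + b * Real.cos (μ * s))) ↔
      (μ * Real.cos μ - κ^2 * (-Real.cos μ / μ + Real.sin μ / μ^2)) * a
        + (-(μ * Real.sin μ)
            - κ^2 * (Real.sin μ / μ + Real.cos μ / μ^2 - 1 / μ^2)) * b = 0 := by
    intro a b
    rw [(deriv_v a b μ 1).deriv, int2 a b μ hμ0]
    simp only [mul_one]
    rw [← sub_eq_zero]
    constructor <;> intro h <;> linear_combination h
  simp only [hiff1, hiff2]
  rw [linsys]
  have hDet : (μ + κ^2 * ((μ - Real.sin μ) / μ^2))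
        * (-(μ * Real.sin μ)
            - κ^2 * (Real.sin μ / μ + Real.cos μ / μ^2 - 1 / μ^2))
      - (κ^2 * ((1 - Real.cos μ) / μ^2))
        * (μ * Real.cos μ - κ^2 * (-Real.cos μ / μ + Real.sin μ / μ^2))
      = Det κ l := by
    rw [Det, ← hμdef, ← hμ2]
    have pyth := Real.sin_sq_add_cos_sq μ
    field_simp
    linear_combination (μ * κ^4 + μ^3 * κ^2) * pyth
  rw [hDet]
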